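/- arXiv:1703.10506 — 3 statements merged into one kernel-verified Lean document; each statement's English description precedes it below -/
import Mathlib

section
/- Let L be an n-dimensional algebra over ℂ with n ≥ 2 such that dim(span of all products) ≤ n − 2 and the annihilator Ann(L) = {x : xy = yx = 0 for all y} is nonzero. Then there exists a map Δ : L → L which is a 2-local derivation (for all x, y ∈ L there is a derivation D with D(x) = Δ(x) and D(y) = Δ(y)) but is not a derivation (in fact Δ is not linear). -/
noncomputable def myf (p : ℂ × ℂ) : ℂ := if p.2 = 0 then 0 else p.1 ^ 2 / p.2

noncomputable def lmap (p q : ℂ) : (ℂ × ℂ) →ₗ[ℂ] ℂ where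
  toFun v := p * v.1 + q * v.2
  map_add' u v := by simp; ring
  map_smul' t v := by simp; ring

@[simp] lemma lmap_apply (p q : ℂ) (v : ℂ × ℂ) : lmap p q v = p * v.1 + q * v.2 := rfl

lemma myf_homog (t : ℂ) (p : ℂ × ℂ) : myf (t • p) = t * myf p := by
  unfold myf
  rcases eq_or_ne p.2 0 with h | h
  · simp [h]
  · rcases eq_or_ne t 0 with ht | ht
    · simp [ht]
    · have : t * p.2 ≠ 0 := mul_ne_zero ht h
      simp only [Prod.smul_fst, Prod.smul_snd, smul_eq_mul, if_neg this, if_neg h]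
      field_simp

lemma exists_eval (v : ℂ × ℂ) (hv : v ≠ 0) (c : ℂ) :
    ∃ g : (ℂ × ℂ) →ₗ[ℂ] ℂ, g v = c := by
  rcases eq_or_ne v.1 0 with h1 | h1
  · have h2 : v.2 ≠ 0 := by
      intro h2; exact hv (Prod.ext h1 h2)
    exact ⟨lmap 0 (c / v.2), by simp [div_mul_cancel₀ _ h2]⟩
  · exact ⟨lmap (c / v.1) 0, by simp [div_mul_cancel₀ _ h1]⟩

lemma exists_glin (v w : ℂ × ℂ) :
    ∃ g : (ℂ × ℂ) →ₗ[ℂ] ℂ, g v = myf v ∧ g w = myf w := by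
  set a := v.1; set b := v.2; set c := w.1; set d := w.2
  rcases eq_or_ne (a * d - b * c) 0 with hdet | hdet
  · rcases eq_or_ne v 0 with hv | hv
    · rcases eq_or_ne w 0 with hw | hw
      · exact ⟨0, by simp [hv, hw, myf]⟩
      · obtain ⟨g, hg⟩ := exists_eval w hw (myf w)
        exact ⟨g, by simp [hv, myf], hg⟩
    · -- w = t • v
      have hkey : ∃ t : ℂ, w = t • v := by
        rcases eq_or_ne a 0 with h1 | h1
        · have hb : b ≠ 0 := by
            intro hb; exact hv (Prod.ext h1 hb)
          refine ⟨d / b, ?_⟩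
          have hc : c = 0 := by
            have : b * c = 0 := by
              have := hdet; rw [h1] at this; linear_combination -this
            rcases mul_eq_zero.1 this with h | h
            · exact absurd h hb
            · exact h
          apply Prod.ext
          · show c = d / b * a
            rw [hc, h1, mul_zero]
          · exact (div_mul_cancel₀ d hb).symm
        · refine ⟨c / a, ?_⟩
          apply Prod.ext
          · exact (div_mul_cancel₀ c h1).symm
          · show d = c / a * b
            rw [div_mul_eq_mul_div, eq_div_iff h1]
            linear_combination hdet
      obtain ⟨t, ht⟩ := hkey
      obtain ⟨g, hg⟩ := exists_eval v hv (myf v)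
      refine ⟨g, hg, ?_⟩
      rw [ht, map_smul, myf_homog, hg, smul_eq_mul]
  · refine ⟨lmap ((myf v * d - myf w * b) / (a * d - b * c))
      ((a * myf w - c * myf v) / (a * d - b * c)), ?_, ?_⟩
    · show _ * a + _ * b = myf v
      rw [div_mul_eq_mul_div, div_mul_eq_mul_div, ← add_div, div_eq_iff hdet]
      ring
    · show _ * c + _ * d = myf w
      rw [div_mul_eq_mul_div, div_mul_eq_mul_div, ← add_div, div_eq_iff hdet]
      ring

/-- An `n`-dimensional complex algebra (`n ≥ 2`) with `dim L² ≤ n - 2` and nonzero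
annihilator admits a 2-local derivation which is not a derivation (not even additive). -/
theorem stmt_5 {L : Type*} [NonUnitalNonAssocRing L] [Module ℂ L]
    [SMulCommClass ℂ L L] [IsScalarTower ℂ L L] [FiniteDimensional ℂ L]
    (hn : 2 ≤ Module.finrank ℂ L)
    (hdim : Module.finrank ℂ (Submodule.span ℂ {z : L | ∃ x y : L, z = x * y}) ≤
      Module.finrank ℂ L - 2)
    (hann : ∃ z : L, z ≠ 0 ∧ ∀ y : L, z * y = 0 ∧ y * z = 0) :
    ∃ Δ : L → L,
      (∀ x y : L, ∃ D : L →ₗ[ℂ] L, (∀ u v : L, D (u * v) = D u * v + u * D v) ∧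
        D x = Δ x ∧ D y = Δ y) ∧
      (¬ ∃ D : L →ₗ[ℂ] L, (∀ u v : L, D (u * v) = D u * v + u * D v) ∧ ∀ x : L, D x = Δ x) ∧
      (¬ ∀ x y : L, Δ (x + y) = Δ x + Δ y) := by
  obtain ⟨z, hz, hzann⟩ := hann
  set M : Submodule ℂ L := Submodule.span ℂ {z : L | ∃ x y : L, z = x * y} with hM
  -- the quotient L ⧸ M has dimension ≥ 2
  have hq : 2 ≤ Module.finrank ℂ (L ⧸ M) := by
    have h := Submodule.finrank_quotient_add_finrank M
    omega
  -- build a surjective linear map φ : L → ℂ × ℂ vanishing on M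
  set b := Module.finBasis ℂ (L ⧸ M) with hb
  set i0 : Fin (Module.finrank ℂ (L ⧸ M)) := ⟨0, by omega⟩ with hi0
  set i1 : Fin (Module.finrank ℂ (L ⧸ M)) := ⟨1, by omega⟩ with hi1
  have hne : i0 ≠ i1 := by
    simp [hi0, hi1, Fin.ext_iff]
  set S : (L ⧸ M) →ₗ[ℂ] ℂ × ℂ := LinearMap.prod (b.coord i0) (b.coord i1) with hS
  set φ : L →ₗ[ℂ] ℂ × ℂ := S ∘ₗ M.mkQ with hφ
  have hφmul : ∀ u v : L, φ (u * v) = 0 := by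
    intro u v
    have : M.mkQ (u * v) = 0 := by
      rw [Submodule.mkQ_apply, Submodule.Quotient.mk_eq_zero]
      exact Submodule.subset_span ⟨u, v, rfl⟩
    simp [hφ, this]
  have hφsurj : ∀ p : ℂ × ℂ, ∃ x : L, φ x = p := by
    intro ⟨s, t⟩
    obtain ⟨x, hx⟩ := Submodule.mkQ_surjective M (s • b i0 + t • b i1)
    refine ⟨x, ?_⟩
    simp only [hφ, LinearMap.comp_apply, hx, hS, LinearMap.prod_apply, Pi.prod]
    simp [Module.Basis.coord_apply, Module.Basis.repr_self, Finsupp.single_apply, hne, hne.symm]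
  refine ⟨fun x => myf (φ x) • z, ?_, ?_, ?_⟩
  · -- 2-local derivation
    intro x y
    obtain ⟨g, hgx, hgy⟩ := exists_glin (φ x) (φ y)
    refine ⟨LinearMap.smulRight (g ∘ₗ φ) z, ?_, ?_, ?_⟩
    · intro u v
      simp only [LinearMap.smulRight_apply, LinearMap.comp_apply, hφmul, map_zero, zero_smul,
        smul_mul_assoc, mul_smul_comm, (hzann v).1, (hzann u).2, smul_zero, add_zero]
    · simp [hgx]
    · simp [hgy]
  · -- not a derivation: would be additive
    rintro ⟨D, _, hall⟩
    replace hall : ∀ x : L, D x = myf (φ x) • z := hall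
    obtain ⟨x, hx⟩ := hφsurj (1, 1)
    obtain ⟨y, hy⟩ := hφsurj (0, -1)
    have hxy : φ (x + y) = (1, 0) := by
      rw [map_add, hx, hy]; simp [Prod.ext_iff]
    have h1 : myf (φ (x + y)) • z = myf (φ x) • z + myf (φ y) • z := by
      rw [← hall, ← hall, ← hall, map_add]
    rw [hxy, hx, hy] at h1
    simp only [myf] at h1
    norm_num at h1
    exact hz h1.symm
  · -- not additive
    intro h
    obtain ⟨x, hx⟩ := hφsurj (1, 1)
    obtain ⟨y, hy⟩ := hφsurj (0, -1)
    have h1 : myf (φ (x + y)) • z = myf (φ x) • z + myf (φ y) • z := h x y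
    have hxy : φ (x + y) = (1, 0) := by
      rw [map_add, hx, hy]; simp [Prod.ext_iff]
    rw [hxy, hx, hy] at h1
    simp only [myf] at h1
    norm_num at h1
    exact hz h1.symm
end

section
/- Let NF_n be the n-dimensional null-filiform Leibniz algebra with basis e₁,…,e_n and multiplication [e_i, e₁] = e_{i+1} for 1 ≤ i ≤ n−1 (all other products of basis elements zero). If D is a derivation of NF_n with D(e₁) = Σ_{i=1}^n α_i e_i, then D(e_j) = j·α₁·e_j + Σ_{i=2}^{n−j+1} α_i e_{j+i−1} for all 2 ≤ j ≤ n. In particular, a derivation of NF_n is uniquely determined by its value at e₁. -/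
/-- The bracket of the null-filiform Leibniz algebra `NF_n` on `Fin n → ℂ`:
`[e_i, e_1] = e_{i+1}` (0-indexed: `[e_i, e_0] = e_{i+1}`), all other basis products zero. -/
def nfMul (n : ℕ) (x y : Fin n → ℂ) : Fin n → ℂ :=
  fun k =>
    if hk : (k : ℕ) = 0 then 0
    else x ⟨(k : ℕ) - 1, by have := k.isLt; omega⟩ * y ⟨0, by have := k.isLt; omega⟩

/-- A derivation `D` of `NF_n` with `D(e₁) = ∑ αᵢ eᵢ` satisfies
`D(e_j) = j α₁ e_j + ∑_{i=2}^{n-j+1} α_i e_{j+i-1}` for `2 ≤ j ≤ n` (here 0-indexed);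
in particular a derivation of `NF_n` is uniquely determined by its value at `e₁`. -/
theorem stmt_8 (n : ℕ) (hn : 0 < n)
    (D : (Fin n → ℂ) →ₗ[ℂ] (Fin n → ℂ))
    (hD : ∀ x y : Fin n → ℂ, D (nfMul n x y) = nfMul n (D x) y + nfMul n x (D y))
    (α : Fin n → ℂ)
    (hα : D (Pi.single (⟨0, hn⟩ : Fin n) 1) = ∑ i : Fin n, α i • (Pi.single i 1 : Fin n → ℂ)) :
    (∀ j k : Fin n, 0 < (j : ℕ) →
      D (Pi.single j 1) k =
        if k = j then ((j : ℕ) + 1 : ℂ) * α ⟨0, hn⟩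
        else if (j : ℕ) < (k : ℕ) then α ⟨(k : ℕ) - (j : ℕ), by have := k.isLt; omega⟩
        else 0) ∧
    (∀ D' : (Fin n → ℂ) →ₗ[ℂ] (Fin n → ℂ),
      (∀ x y : Fin n → ℂ, D' (nfMul n x y) = nfMul n (D' x) y + nfMul n x (D' y)) →
      D' (Pi.single (⟨0, hn⟩ : Fin n) 1) = D (Pi.single (⟨0, hn⟩ : Fin n) 1) → D' = D) := by
  have hα0 : ∀ k : Fin n, D (Pi.single (⟨0, hn⟩ : Fin n) 1) k = α k := by
    intro k
    rw [hα]
    simp [Finset.sum_apply, Pi.single_apply]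
  -- bracket relation: [e_m, e_0] = e_{m+1}
  have hbr : ∀ (m : ℕ) (hm' : m < n) (hm : m + 1 < n),
      nfMul n (Pi.single (⟨m, hm'⟩ : Fin n) 1) (Pi.single (⟨0, hn⟩ : Fin n) 1)
        = Pi.single (⟨m + 1, hm⟩ : Fin n) 1 := by
    intro m hm' hm
    funext k
    simp only [nfMul, Pi.single_apply, Fin.mk.injEq, Fin.ext_iff, Fin.val_mk]
    split_ifs <;> first
      | ring1
      | omega
      | (exfalso; omega)
  have main : ∀ (m : ℕ) (hm : m < n), ∀ k : Fin n,
      D (Pi.single (⟨m, hm⟩ : Fin n) 1) k =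
        if (k : ℕ) = m then ((m : ℕ) + 1 : ℂ) * α ⟨0, hn⟩
        else if m < (k : ℕ) then α ⟨(k : ℕ) - m, by have := k.isLt; omega⟩
        else 0 := by
    intro m
    induction m with
    | zero =>
      intro hm k
      rw [hα0]
      by_cases hk : (k : ℕ) = 0
      · rw [if_pos hk]
        have : k = ⟨0, hn⟩ := Fin.ext hk
        rw [this]; ring
      · rw [if_neg hk, if_pos (by omega)]
        exact congrArg α (Fin.ext (by simp))
    | succ m ih =>
      intro hm k
      have hm' : m < n := by omega
      rw [← hbr m hm' hm, hD]
      simp only [Pi.add_apply, nfMul]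
      by_cases hk : (k : ℕ) = 0
      · rw [dif_pos hk, dif_pos hk, if_neg (by omega)]
        rw [if_neg (by omega)]
        simp
      · rw [dif_neg hk, dif_neg hk]
        have h1 : (Pi.single (⟨0, hn⟩ : Fin n) 1 : Fin n → ℂ) ⟨0, by omega⟩ = 1 := by
          simp [Pi.single_apply]
        have h2 : D (Pi.single (⟨0, hn⟩ : Fin n) 1) ⟨0, by omega⟩ = α ⟨0, hn⟩ := hα0 _
        rw [h1, h2, mul_one]
        rw [ih hm' ⟨(k : ℕ) - 1, by have := k.isLt; omega⟩]
        simp only [Pi.single_apply, Fin.mk.injEq, Fin.ext_iff, Fin.val_mk]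
        split_ifs <;> first
      | (push_cast; ring1)
      | (exfalso; omega)
      | (simp only [zero_add, zero_mul, mul_zero, add_zero, one_mul];
         exact congrArg α (Fin.ext (by simp only [Fin.val_mk]; omega)))
      | (simp only [zero_add, zero_mul, mul_zero, add_zero, one_mul]; push_cast; ring)
      | simp
  constructor
  · intro j k hj
    have h := main (j : ℕ) j.isLt k
    simp only [Fin.eta] at h
    rw [h]
    congr 1
    simp [Fin.ext_iff]
  · intro D' hD' h0
    have key : ∀ (m : ℕ) (hm : m < n),
        D' (Pi.single (⟨m, hm⟩ : Fin n) 1) = D (Pi.single (⟨m, hm⟩ : Fin n) 1) := by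
      intro m
      induction m with
      | zero => intro hm; exact h0
      | succ m ih =>
        intro hm
        have hm' : m < n := by omega
        rw [← hbr m hm' hm, hD', hD, ih hm', h0]
    apply (Pi.basisFun ℂ (Fin n)).ext
    intro i
    have h := key (i : ℕ) i.isLt
    simp only [Fin.eta] at h
    simpa using h
end

section
/- Every 2-local derivation of the null-filiform Leibniz algebra NF_n is a derivation. -/
/-- `[e_k, e_0] = e_{k+1}` for the standard basis vectors. -/
lemma nfMul_single (n k : ℕ) (h1 : k + 1 < n) :
    nfMul n (Pi.single ⟨k, by omega⟩ (1:ℂ)) (Pi.single ⟨0, by omega⟩ (1:ℂ))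
      = Pi.single ⟨k+1, h1⟩ 1 := by
  funext j
  simp only [nfMul, Pi.single_apply, Fin.ext_iff]
  split_ifs <;> simp_all <;> omega

/-- A derivation of `NF_n` is determined by its value on `e₀`. -/
lemma deriv_ext {n : ℕ} (hn : 0 < n) (D D' : (Fin n → ℂ) →ₗ[ℂ] (Fin n → ℂ))
    (hD : ∀ u v, D (nfMul n u v) = nfMul n (D u) v + nfMul n u (D v))
    (hD' : ∀ u v, D' (nfMul n u v) = nfMul n (D' u) v + nfMul n u (D' v))
    (h0 : D (Pi.single ⟨0, hn⟩ 1) = D' (Pi.single ⟨0, hn⟩ 1)) :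
    D = D' := by
  have key : ∀ k (hk : k < n), D (Pi.single ⟨k, hk⟩ 1) = D' (Pi.single ⟨k, hk⟩ 1) := by
    intro k
    induction k with
    | zero => intro hk; exact h0
    | succ k ih =>
      intro hk
      rw [← nfMul_single n k hk, hD, hD', ih (by omega), h0]
  apply LinearMap.ext; intro x
  have hx : x = ∑ i : Fin n, x i • (Pi.single i 1 : Fin n → ℂ) := by
    funext j; simp [Pi.single_apply]
  rw [hx, map_sum, map_sum]
  refine Finset.sum_congr rfl fun i _ => ?_
  rw [map_smul, map_smul]
  congr 1
  simpa using key i.val i.isLt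

/-- Every 2-local derivation of the null-filiform Leibniz algebra `NF_n` is a derivation. -/
theorem stmt_9 (n : ℕ) (Δ : (Fin n → ℂ) → (Fin n → ℂ))
    (h2loc : ∀ x y : Fin n → ℂ, ∃ D : (Fin n → ℂ) →ₗ[ℂ] (Fin n → ℂ),
      (∀ u v : Fin n → ℂ, D (nfMul n u v) = nfMul n (D u) v + nfMul n u (D v)) ∧
      D x = Δ x ∧ D y = Δ y) :
    ∃ D : (Fin n → ℂ) →ₗ[ℂ] (Fin n → ℂ),
      (∀ u v : Fin n → ℂ, D (nfMul n u v) = nfMul n (D u) v + nfMul n u (D v)) ∧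
      ∀ x : Fin n → ℂ, Δ x = D x := by
  rcases Nat.eq_zero_or_pos n with hn | hn
  · subst hn
    obtain ⟨D, hD, -, -⟩ := h2loc 0 0
    exact ⟨D, hD, fun x => Subsingleton.elim _ _⟩
  · obtain ⟨D, hD, hDe, -⟩ := h2loc (Pi.single ⟨0, hn⟩ 1) (Pi.single ⟨0, hn⟩ 1)
    refine ⟨D, hD, fun x => ?_⟩
    obtain ⟨D', hD', hD'e, hD'x⟩ := h2loc (Pi.single ⟨0, hn⟩ 1) x
    rw [← hD'x, deriv_ext hn D' D hD' hD (by rw [hD'e, hDe])]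
end
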